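/- Critical points of S restricted to M⁰ are unique up to scaling: if (β,α_1,α_2) and (β′,α′_1,α′_2) are both critical points of S restricted to M⁰, then there exists τ > 0 such that β′ = τβ, α′_1 = τα_1 and α′_2 = τα_2. -/

import Mathlib

lemma fderiv_apply_aux (E G A B C : ℝ) (p v : ℝ × ℝ × ℝ)
    (h1 : p.1 ≠ 0) (h2 : p.2.1 ≠ 0) (h3 : p.2.2 ≠ 0) :
    fderiv ℝ (fun q : ℝ × ℝ × ℝ =>
      (E * q.2.1 + G * q.2.2) * (q.1 ^ 2)⁻¹ + A * (q.1)⁻¹ + B * (q.2.1)⁻¹ + C * (q.2.2)⁻¹) p v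
      = (-(2 * (E * p.2.1 + G * p.2.2)) / p.1 ^ 3 - A / p.1 ^ 2) * v.1
        + (E / p.1 ^ 2 - B / p.2.1 ^ 2) * v.2.1
        + (G / p.1 ^ 2 - C / p.2.2 ^ 2) * v.2.2 := by
  set f : ℝ × ℝ × ℝ → ℝ := fun q =>
      (E * q.2.1 + G * q.2.2) * (q.1 ^ 2)⁻¹ + A * (q.1)⁻¹ + B * (q.2.1)⁻¹ + C * (q.2.2)⁻¹
    with hf
  have hd1 : DifferentiableAt ℝ (fun q : ℝ × ℝ × ℝ => q.1) p := differentiableAt_fst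
  have hd2 : DifferentiableAt ℝ (fun q : ℝ × ℝ × ℝ => q.2.1) p := differentiableAt_snd.fst
  have hd3 : DifferentiableAt ℝ (fun q : ℝ × ℝ × ℝ => q.2.2) p := differentiableAt_snd.snd
  have hne : p.1 ^ 2 ≠ 0 := pow_ne_zero 2 h1
  have hdiff : DifferentiableAt ℝ f p := by
    have enum : DifferentiableAt ℝ (fun q : ℝ × ℝ × ℝ => E * q.2.1 + G * q.2.2) p :=
      (hd2.const_mul E).add (hd3.const_mul G)
    exact ((((enum.mul ((hd1.pow 2).inv hne)).add
      ((hd1.inv h1).const_mul A)).add ((hd2.inv h2).const_mul B)).add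
      ((hd3.inv h3).const_mul C))
  have hg : HasDerivAt (fun t : ℝ => p + t • v) v 0 := by
    simpa using ((hasDerivAt_id (0:ℝ)).smul_const v).const_add p
  have h0 : (fun t : ℝ => p + t • v) 0 = p := by simp
  have hc : HasDerivAt (fun t : ℝ => f (p + t • v)) (fderiv ℝ f p v) 0 := by
    have hP : HasFDerivAt f (fderiv ℝ f p) ((fun t : ℝ => p + t • v) 0) := by
      rw [h0]; exact hdiff.hasFDerivAt
    have h := hP.comp_hasDerivAt 0 hg
    exact h
  -- explicit 1D computation
  have hl1 : HasDerivAt (fun t : ℝ => p.1 + t * v.1) v.1 0 := by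
    simpa using ((hasDerivAt_id (0:ℝ)).mul_const v.1).const_add p.1
  have hl2 : HasDerivAt (fun t : ℝ => p.2.1 + t * v.2.1) v.2.1 0 := by
    simpa using ((hasDerivAt_id (0:ℝ)).mul_const v.2.1).const_add p.2.1
  have hl3 : HasDerivAt (fun t : ℝ => p.2.2 + t * v.2.2) v.2.2 0 := by
    simpa using ((hasDerivAt_id (0:ℝ)).mul_const v.2.2).const_add p.2.2
  have hden : HasDerivAt (fun t : ℝ => (p.1 + t * v.1) ^ 2)
      (2 * (p.1 + 0 * v.1) ^ 1 * v.1) 0 := by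
    simpa using hl1.fun_pow 2
  have hden0 : (p.1 + 0 * v.1) ^ 2 ≠ 0 := by simpa using hne
  have hdeninv := hden.inv hden0
  have hnum : HasDerivAt (fun t : ℝ => E * (p.2.1 + t * v.2.1) + G * (p.2.2 + t * v.2.2))
      (E * v.2.1 + G * v.2.2) 0 := (hl2.const_mul E).add (hl3.const_mul G)
  have ht1 := hnum.mul hdeninv
  have ht2 := (hl1.inv (by simpa using h1)).const_mul A
  have ht3 := (hl2.inv (by simpa using h2)).const_mul B
  have ht4 := (hl3.inv (by simpa using h3)).const_mul C
  have hD := ((ht1.add ht2).add ht3).add ht4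
  have heq : (fun t : ℝ => f (p + t • v)) = (fun t : ℝ =>
      (E * (p.2.1 + t * v.2.1) + G * (p.2.2 + t * v.2.2)) * ((p.1 + t * v.1) ^ 2)⁻¹
      + A * (p.1 + t * v.1)⁻¹ + B * (p.2.1 + t * v.2.1)⁻¹ + C * (p.2.2 + t * v.2.2)⁻¹) := by
    funext t
    simp [hf, Prod.fst_add, Prod.snd_add, smul_eq_mul]
  rw [heq] at hc
  have hfin := hc.unique hD
  rw [hfin]
  simp only [Pi.inv_apply, zero_mul, add_zero, pow_one]
  field_simp
  ring

lemma crit_eqs (a b c1 c2 n Tp t1 t2 : ℝ)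
    (S F : ℝ × ℝ × ℝ → ℝ)
    (hS : ∀ q : ℝ × ℝ × ℝ, S q = -(1/4) * (a * q.2.1 + b * q.2.2) / q.1^2
        - n / (2 * q.1) + (1/4) * (c1 / q.2.1 + c2 / q.2.2))
    (hF : ∀ q : ℝ × ℝ × ℝ, F q = -n * Tp / q.1 + t1 / q.2.1 + t2 / q.2.2)
    (p : ℝ × ℝ × ℝ) (hβ : 0 < p.1) (hα1 : 0 < p.2.1) (hα2 : 0 < p.2.2)
    (hcrit : ∀ v : ℝ × ℝ × ℝ, fderiv ℝ F p v = 0 → fderiv ℝ S p v = 0) :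
    n * Tp * (a * p.2.1 ^ 2 + c1 * p.1 ^ 2)
        = 2 * t1 * (a * p.2.1 + b * p.2.2 + n * p.1) * p.1
    ∧ n * Tp * (b * p.2.2 ^ 2 + c2 * p.1 ^ 2)
        = 2 * t2 * (a * p.2.1 + b * p.2.2 + n * p.1) * p.1 := by
  have h1 : p.1 ≠ 0 := ne_of_gt hβ
  have h2 : p.2.1 ≠ 0 := ne_of_gt hα1
  have h3 : p.2.2 ≠ 0 := ne_of_gt hα2
  have hSfun : S = fun q : ℝ × ℝ × ℝ =>
      ((-(a/4)) * q.2.1 + (-(b/4)) * q.2.2) * (q.1 ^ 2)⁻¹ + (-(n/2)) * (q.1)⁻¹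
        + (c1/4) * (q.2.1)⁻¹ + (c2/4) * (q.2.2)⁻¹ := by
    funext q; rw [hS]; ring
  have hFfun : F = fun q : ℝ × ℝ × ℝ =>
      ((0:ℝ) * q.2.1 + (0:ℝ) * q.2.2) * (q.1 ^ 2)⁻¹ + (-(n*Tp)) * (q.1)⁻¹
        + t1 * (q.2.1)⁻¹ + t2 * (q.2.2)⁻¹ := by
    funext q; rw [hF]; ring
  have hFder : ∀ v : ℝ × ℝ × ℝ, fderiv ℝ F p v
      = (n * Tp / p.1 ^ 2) * v.1 + (- t1 / p.2.1 ^ 2) * v.2.1 + (- t2 / p.2.2 ^ 2) * v.2.2 := by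
    intro v
    rw [hFfun, fderiv_apply_aux _ _ _ _ _ _ _ h1 h2 h3]
    ring
  have hSder : ∀ v : ℝ × ℝ × ℝ, fderiv ℝ S p v
      = ((a * p.2.1 + b * p.2.2) / (2 * p.1 ^ 3) + n / (2 * p.1 ^ 2)) * v.1
        + (-(a / (4 * p.1 ^ 2)) - c1 / (4 * p.2.1 ^ 2)) * v.2.1
        + (-(b / (4 * p.1 ^ 2)) - c2 / (4 * p.2.2 ^ 2)) * v.2.2 := by
    intro v
    rw [hSfun, fderiv_apply_aux _ _ _ _ _ _ _ h1 h2 h3]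
    field_simp
    ring
  constructor
  · have hFz : fderiv ℝ F p (t1 * p.1 ^ 2, n * Tp * p.2.1 ^ 2, 0) = 0 := by
      rw [hFder]; field_simp; ring
    have hSz := hcrit _ hFz
    rw [hSder] at hSz
    simp only at hSz
    field_simp at hSz
    have hcan : (16 * p.1 ^ 5 * p.2.1 ^ 2) * (n * Tp * (a * p.2.1 ^ 2 + c1 * p.1 ^ 2))
        = (16 * p.1 ^ 5 * p.2.1 ^ 2) * (2 * t1 * (a * p.2.1 + b * p.2.2 + n * p.1) * p.1) := by
      have key : p.2.2 ^ 2 * (16 * p.1 ^ 5 * p.2.1 ^ 2 * (n * Tp * (a * p.2.1 ^ 2 + c1 * p.1 ^ 2))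
          - 16 * p.1 ^ 5 * p.2.1 ^ 2 * (2 * t1 * (a * p.2.1 + b * p.2.2 + n * p.1) * p.1)) = 0 := by
        linear_combination (-8 * p.1 ^ 5 * p.2.1 ^ 2) * hSz
      exact sub_eq_zero.mp ((mul_eq_zero.mp key).resolve_left (by positivity))
    exact mul_left_cancel₀ (by positivity) hcan
  · have hFz : fderiv ℝ F p (t2 * p.1 ^ 2, 0, n * Tp * p.2.2 ^ 2) = 0 := by
      rw [hFder]; field_simp; ring
    have hSz := hcrit _ hFz
    rw [hSder] at hSz
    simp only at hSz
    field_simp at hSz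
    have hcan : (16 * p.1 ^ 5 * p.2.2 ^ 2) * (n * Tp * (b * p.2.2 ^ 2 + c2 * p.1 ^ 2))
        = (16 * p.1 ^ 5 * p.2.2 ^ 2) * (2 * t2 * (a * p.2.1 + b * p.2.2 + n * p.1) * p.1) := by
      have key : p.2.1 ^ 2 * (16 * p.1 ^ 5 * p.2.2 ^ 2 * (n * Tp * (b * p.2.2 ^ 2 + c2 * p.1 ^ 2))
          - 16 * p.1 ^ 5 * p.2.2 ^ 2 * (2 * t2 * (a * p.2.1 + b * p.2.2 + n * p.1) * p.1)) = 0 := by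
        linear_combination (-8 * p.1 ^ 5 * p.2.2 ^ 2) * hSz
      exact sub_eq_zero.mp ((mul_eq_zero.mp key).resolve_left (by positivity))
    exact mul_left_cancel₀ (by positivity) hcan

lemma sq_inj_pos (x y : ℝ) (hx : 0 < x) (hy : 0 < y) (h : x ^ 2 = y ^ 2) : x = y := by
  nlinarith [sq_nonneg (x - y), sq_nonneg (x + y)]

lemma mono_aux (a b c1 c2 n t1 t2 u v u' v' : ℝ)
    (ha : 0 < a) (hb : 0 < b) (hc1 : 0 ≤ c1) (hc2 : 0 ≤ c2) (hn : 0 < n)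
    (ht1 : 0 < t1) (ht2 : 0 < t2)
    (hu : 0 < u) (hv : 0 < v) (hu' : 0 < u') (hv' : 0 < v')
    (E1 : t2 * (a * u ^ 2 + c1) = t1 * (b * v ^ 2 + c2))
    (E1' : t2 * (a * u' ^ 2 + c1) = t1 * (b * v' ^ 2 + c2))
    (E2 : c1 / u + c2 / v = a * u + b * v + 2 * n)
    (E2' : c1 / u' + c2 / v' = a * u' + b * v' + 2 * n)
    (hlt : u < u') : False := by
  have hvv : v < v' := by
    by_contra h
    push_neg at h
    nlinarith [mul_pos (mul_pos ht2 ha) (mul_pos (sub_pos.mpr hlt) (by positivity : (0:ℝ) < u + u')),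
      mul_nonneg (mul_nonneg ht1.le hb.le) (mul_nonneg (sub_nonneg.mpr h) (by positivity : (0:ℝ) ≤ v + v'))]
  have h1 : c1 / u' ≤ c1 / u := by
    rw [div_le_div_iff₀ hu' hu]
    nlinarith
  have h2 : c2 / v' ≤ c2 / v := by
    rw [div_le_div_iff₀ hv' hv]
    nlinarith
  have h3 : a * u < a * u' := by nlinarith
  have h4 : b * v < b * v' := by nlinarith
  linarith

set_option maxHeartbeats 1000000 in
/-- Theorem 5.8, last assertion: critical points of `S|_{M⁰}` are unique up to scaling. -/
theorem stmt_16 (d₁ d₂ : ℕ) (hd₁ : 0 < d₁) (hd₂ : 0 < d₂)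
    (κ₁ κ₂ : ℝ) (hκ₁0 : 0 ≤ κ₁) (hκ₁1 : κ₁ < 1) (hκ₂0 : 0 ≤ κ₂) (hκ₂1 : κ₂ < 1)
    (n : ℝ) (hn : n = 2 * ((d₁ : ℝ) * (1 - κ₁) + (d₂ : ℝ) * (1 - κ₂)))
    (Tp T₁ T₂ : ℝ) (hTp : 0 < Tp) (hT₁ : 0 < T₁) (hT₂ : 0 < T₂)
    (S F : ℝ × ℝ × ℝ → ℝ)
    (hS : ∀ p, S p = -(1/4) * ((d₁ : ℝ) * (1 - κ₁) * p.2.1 + (d₂ : ℝ) * (1 - κ₂) * p.2.2) / p.1^2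
        - n / (2 * p.1) + (1/4) * ((d₁ : ℝ) * κ₁ / p.2.1 + (d₂ : ℝ) * κ₂ / p.2.2))
    (hF : ∀ p, F p = -n * Tp / p.1 + (d₁ : ℝ) * T₁ / p.2.1 + (d₂ : ℝ) * T₂ / p.2.2)
    (M0 : Set (ℝ × ℝ × ℝ))
    (hM0 : M0 = {p | 0 < p.1 ∧ 0 < p.2.1 ∧ 0 < p.2.2 ∧ F p = 0})
    (p p' : ℝ × ℝ × ℝ) (hp : p ∈ M0) (hp' : p' ∈ M0)
    (hcrit : ∀ v : ℝ × ℝ × ℝ, fderiv ℝ F p v = 0 → fderiv ℝ S p v = 0)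
    (hcrit' : ∀ v : ℝ × ℝ × ℝ, fderiv ℝ F p' v = 0 → fderiv ℝ S p' v = 0) :
    ∃ τ : ℝ, 0 < τ ∧ p'.1 = τ * p.1 ∧ p'.2.1 = τ * p.2.1 ∧ p'.2.2 = τ * p.2.2 := by
  rw [hM0] at hp hp'
  obtain ⟨hβ, hα1, hα2, hFp⟩ := hp
  obtain ⟨hβ', hα1', hα2', hFp'⟩ := hp'
  set a : ℝ := (d₁ : ℝ) * (1 - κ₁) with ha_def
  set b : ℝ := (d₂ : ℝ) * (1 - κ₂) with hb_def
  set c1 : ℝ := (d₁ : ℝ) * κ₁ with hc1_def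
  set c2 : ℝ := (d₂ : ℝ) * κ₂ with hc2_def
  set t1 : ℝ := (d₁ : ℝ) * T₁ with ht1_def
  set t2 : ℝ := (d₂ : ℝ) * T₂ with ht2_def
  have hd₁' : (0:ℝ) < (d₁ : ℝ) := by exact_mod_cast hd₁
  have hd₂' : (0:ℝ) < (d₂ : ℝ) := by exact_mod_cast hd₂
  have ha : 0 < a := mul_pos hd₁' (by linarith)
  have hb : 0 < b := mul_pos hd₂' (by linarith)
  have hc1 : 0 ≤ c1 := mul_nonneg hd₁'.le hκ₁0
  have hc2 : 0 ≤ c2 := mul_nonneg hd₂'.le hκ₂0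
  have hn0 : 0 < n := by rw [hn]; nlinarith
  have ht1 : 0 < t1 := mul_pos hd₁' hT₁
  have ht2 : 0 < t2 := mul_pos hd₂' hT₂
  clear_value a b c1 c2 t1 t2
  clear ha_def hb_def hc1_def hc2_def ht1_def ht2_def
  have hnT : 0 < n * Tp := mul_pos hn0 hTp
  obtain ⟨A1, A2⟩ := crit_eqs a b c1 c2 n Tp t1 t2 S F hS hF p hβ hα1 hα2 hcrit
  obtain ⟨A1', A2'⟩ := crit_eqs a b c1 c2 n Tp t1 t2 S F hS hF p' hβ' hα1' hα2' hcrit'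
  have hβne : p.1 ≠ 0 := ne_of_gt hβ
  have hβne' : p'.1 ≠ 0 := ne_of_gt hβ'
  -- constraints, cleared
  have hC : t1 * p.1 * p.2.2 + t2 * p.1 * p.2.1 = n * Tp * (p.2.1 * p.2.2) := by
    have h := hFp
    rw [hF p] at h
    field_simp at h
    linarith
  have hC' : t1 * p'.1 * p'.2.2 + t2 * p'.1 * p'.2.1 = n * Tp * (p'.2.1 * p'.2.2) := by
    have h := hFp'
    rw [hF p'] at h
    field_simp at h
    linarith
  -- normalized variables
  set u : ℝ := p.2.1 / p.1 with hu_def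
  set v : ℝ := p.2.2 / p.1 with hv_def
  set u' : ℝ := p'.2.1 / p'.1 with hu'_def
  set v' : ℝ := p'.2.2 / p'.1 with hv'_def
  have hu : 0 < u := div_pos hα1 hβ
  have hv : 0 < v := div_pos hα2 hβ
  have hu' : 0 < u' := div_pos hα1' hβ'
  have hv' : 0 < v' := div_pos hα2' hβ'
  have hα1eq : p.2.1 = u * p.1 := by rw [hu_def]; field_simp
  have hα2eq : p.2.2 = v * p.1 := by rw [hv_def]; field_simp
  have hα1eq' : p'.2.1 = u' * p'.1 := by rw [hu'_def]; field_simp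
  have hα2eq' : p'.2.2 = v' * p'.1 := by rw [hv'_def]; field_simp
  clear_value u v u' v'
  rw [hα1eq, hα2eq] at A1 A2 hC
  rw [hα1eq', hα2eq'] at A1' A2' hC'
  have hp2 : (p.1 : ℝ) ^ 2 ≠ 0 := pow_ne_zero 2 hβne
  have hp2' : (p'.1 : ℝ) ^ 2 ≠ 0 := pow_ne_zero 2 hβne'
  have A1u : n * Tp * (a * u ^ 2 + c1) = 2 * t1 * (a * u + b * v + n) :=
    mul_left_cancel₀ hp2 (by linear_combination A1)
  have A2u : n * Tp * (b * v ^ 2 + c2) = 2 * t2 * (a * u + b * v + n) :=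
    mul_left_cancel₀ hp2 (by linear_combination A2)
  have A1u' : n * Tp * (a * u' ^ 2 + c1) = 2 * t1 * (a * u' + b * v' + n) :=
    mul_left_cancel₀ hp2' (by linear_combination A1')
  have A2u' : n * Tp * (b * v' ^ 2 + c2) = 2 * t2 * (a * u' + b * v' + n) :=
    mul_left_cancel₀ hp2' (by linear_combination A2')
  have Cu : t1 * v + t2 * u = n * Tp * (u * v) :=
    mul_left_cancel₀ hp2 (by linear_combination hC)
  have Cu' : t1 * v' + t2 * u' = n * Tp * (u' * v') :=
    mul_left_cancel₀ hp2' (by linear_combination hC')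
  -- derived equations
  have E1 : t2 * (a * u ^ 2 + c1) = t1 * (b * v ^ 2 + c2) :=
    mul_left_cancel₀ (ne_of_gt hnT) (by linear_combination t2 * A1u - t1 * A2u)
  have E1' : t2 * (a * u' ^ 2 + c1) = t1 * (b * v' ^ 2 + c2) :=
    mul_left_cancel₀ (ne_of_gt hnT) (by linear_combination t2 * A1u' - t1 * A2u')
  have E2p : c1 * v + c2 * u = u * v * (a * u + b * v + 2 * n) :=
    mul_left_cancel₀ (ne_of_gt hnT)
      (by linear_combination v * A1u + u * A2u + 2 * (a * u + b * v + n) * Cu)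
  have E2p' : c1 * v' + c2 * u' = u' * v' * (a * u' + b * v' + 2 * n) :=
    mul_left_cancel₀ (ne_of_gt hnT)
      (by linear_combination v' * A1u' + u' * A2u' + 2 * (a * u' + b * v' + n) * Cu')
  have E2 : c1 / u + c2 / v = a * u + b * v + 2 * n := by
    rw [div_add_div c1 c2 (ne_of_gt hu) (ne_of_gt hv), div_eq_iff (by positivity)]
    linear_combination E2p
  have E2' : c1 / u' + c2 / v' = a * u' + b * v' + 2 * n := by
    rw [div_add_div c1 c2 (ne_of_gt hu') (ne_of_gt hv'), div_eq_iff (by positivity)]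
    linear_combination E2p'
  -- uniqueness of (u,v)
  have huu : u = u' := by
    rcases lt_trichotomy u u' with h | h | h
    · exact absurd (mono_aux a b c1 c2 n t1 t2 u v u' v' ha hb hc1 hc2 hn0 ht1 ht2
        hu hv hu' hv' E1 E1' E2 E2' h) (by simp)
    · exact h
    · exact absurd (mono_aux a b c1 c2 n t1 t2 u' v' u v ha hb hc1 hc2 hn0 ht1 ht2
        hu' hv' hu hv E1' E1 E2' E2 h) (by simp)
  have hvv : v = v' := by
    have hsq : v ^ 2 = v' ^ 2 := by
      have h : t1 * (b * v ^ 2 + c2) = t1 * (b * v' ^ 2 + c2) := by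
        rw [← E1, ← E1', huu]
      have h2 := mul_left_cancel₀ (ne_of_gt ht1) h
      have h3 : b * v ^ 2 = b * v' ^ 2 := by linarith
      exact mul_left_cancel₀ (ne_of_gt hb) h3
    exact sq_inj_pos v v' hv hv' hsq
  refine ⟨p'.1 / p.1, div_pos hβ' hβ, (div_mul_cancel₀ p'.1 hβne).symm, ?_, ?_⟩
  · rw [hα1eq', hα1eq, ← huu]
    field_simp
  · rw [hα2eq', hα2eq, ← hvv]
    field_simp
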